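/- For A ∈ ℝ^{m×n}, b ∈ ℝ^m, and λ > 0, the norm of the Tikhonov solution ‖x_λ‖₂, with x_λ = (AᵀA + λ²I)⁻¹Aᵀb, is a nonincreasing function of λ on (0, ∞). -/

import Mathlib

open Matrix BigOperators

private lemma dot_symm {k : ℕ} (M : Matrix (Fin k) (Fin k) ℝ) (hsym : Mᵀ = M)
    (u v : Fin k → ℝ) : u ⬝ᵥ (M *ᵥ v) = v ⬝ᵥ (M *ᵥ u) := by
  rw [Matrix.dotProduct_mulVec, ← Matrix.vecMul_transpose, hsym, dotProduct_comm]

private lemma expand_quad {m n : ℕ} (A : Matrix (Fin m) (Fin n) ℝ) (b : Fin m → ℝ)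
    (lam : ℝ) (y : Fin n → ℝ) :
    (A *ᵥ y - b) ⬝ᵥ (A *ᵥ y - b) + lam ^ 2 * (y ⬝ᵥ y) =
      y ⬝ᵥ ((Aᵀ * A + lam ^ 2 • (1 : Matrix (Fin n) (Fin n) ℝ)) *ᵥ y)
        - 2 * (y ⬝ᵥ (Aᵀ *ᵥ b)) + b ⬝ᵥ b := by
  have h1 : ∀ w : Fin m → ℝ, y ⬝ᵥ (Aᵀ *ᵥ w) = (A *ᵥ y) ⬝ᵥ w := by
    intro w
    rw [Matrix.dotProduct_mulVec, Matrix.vecMul_transpose]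
  simp only [Matrix.add_mulVec, dotProduct_add, Matrix.smul_mulVec,
    Matrix.one_mulVec, dotProduct_smul, ← Matrix.mulVec_mulVec, h1,
    dotProduct_sub, sub_dotProduct, smul_eq_mul]
  rw [dotProduct_comm b (A *ᵥ y)]
  ring

private lemma min_quad {k : ℕ} {M : Matrix (Fin k) (Fin k) ℝ} (hM : M.PosSemidef)
    (hsym : Mᵀ = M) {u c : Fin k → ℝ} (hu : M *ᵥ u = c) (v : Fin k → ℝ) :
    u ⬝ᵥ (M *ᵥ u) - 2 * (u ⬝ᵥ c) ≤ v ⬝ᵥ (M *ᵥ v) - 2 * (v ⬝ᵥ c) := by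
  have h0 := hM.dotProduct_mulVec_nonneg (v - u)
  rw [star_trivial] at h0
  have hexp : (v - u) ⬝ᵥ (M *ᵥ (v - u)) =
      v ⬝ᵥ (M *ᵥ v) - 2 * (v ⬝ᵥ (M *ᵥ u)) + u ⬝ᵥ (M *ᵥ u) := by
    rw [Matrix.mulVec_sub, dotProduct_sub, sub_dotProduct,
      sub_dotProduct, dot_symm M hsym u v]
    ring
  have huu : u ⬝ᵥ (M *ᵥ u) = u ⬝ᵥ c := by rw [hu]
  have hvc : v ⬝ᵥ (M *ᵥ u) = v ⬝ᵥ c := by rw [hu]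
  rw [hexp, hvc, huu] at h0
  linarith

/-- For `A ∈ ℝ^{m×n}`, `b ∈ ℝ^m`, and `λ > 0`, the norm of the
Tikhonov solution `x_λ = (AᵀA + λ²I)⁻¹ Aᵀ b` is a nonincreasing function of `λ`
on `(0, ∞)`. -/
theorem tikhonov_solution_norm_nonincreasing {m n : ℕ}
    (A : Matrix (Fin m) (Fin n) ℝ) (b : Fin m → ℝ)
    (x : ℝ → Fin n → ℝ)
    (hx : ∀ lam : ℝ, x lam =
      ((Aᵀ * A + lam ^ 2 • (1 : Matrix (Fin n) (Fin n) ℝ))⁻¹).mulVec (Aᵀ.mulVec b)) :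
    AntitoneOn (fun lam => Real.sqrt (∑ j, x lam j ^ 2)) (Set.Ioi (0 : ℝ)) := by
  -- abbreviations
  set c : Fin n → ℝ := Aᵀ *ᵥ b with hc
  have hAAps : (Aᵀ * A).PosSemidef := by
    have := Matrix.posSemidef_conjTranspose_mul_self A
    simpa using this
  have hMsym : ∀ lam : ℝ, (Aᵀ * A + lam ^ 2 • (1 : Matrix (Fin n) (Fin n) ℝ))ᵀ
      = Aᵀ * A + lam ^ 2 • 1 := by
    intro lam
    simp [Matrix.transpose_add, Matrix.transpose_mul, Matrix.transpose_smul]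
  have hMps : ∀ lam : ℝ, (Aᵀ * A + lam ^ 2 • (1 : Matrix (Fin n) (Fin n) ℝ)).PosSemidef := by
    intro lam
    refine Matrix.PosSemidef.add hAAps ?_
    have : (lam ^ 2 • (1 : Matrix (Fin n) (Fin n) ℝ)) =
        Matrix.diagonal (fun _ => lam ^ 2) := by
      rw [Matrix.smul_one_eq_diagonal]
    rw [this]
    exact Matrix.PosSemidef.diagonal (fun i => sq_nonneg lam)
  have hMpd : ∀ lam : ℝ, lam ≠ 0 →
      (Aᵀ * A + lam ^ 2 • (1 : Matrix (Fin n) (Fin n) ℝ)).PosDef := by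
    intro lam hlam
    refine Matrix.PosDef.posSemidef_add hAAps ?_
    have h2 : (0 : ℝ) < lam ^ 2 := by positivity
    have : (lam ^ 2 • (1 : Matrix (Fin n) (Fin n) ℝ)) =
        Matrix.diagonal (fun _ => lam ^ 2) := by
      rw [Matrix.smul_one_eq_diagonal]
    rw [this]
    exact Matrix.posDef_diagonal_iff.2 fun _ => h2
  -- the normal equations
  have hMx : ∀ lam : ℝ, lam ≠ 0 →
      (Aᵀ * A + lam ^ 2 • (1 : Matrix (Fin n) (Fin n) ℝ)) *ᵥ x lam = c := by
    intro lam hlam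
    rw [hx lam, Matrix.mulVec_mulVec,
      Matrix.mul_nonsing_inv _ ((Matrix.isUnit_iff_isUnit_det _).1 (hMpd lam hlam).isUnit),
      Matrix.one_mulVec]
  -- the minimizing property
  have hmin : ∀ lam : ℝ, lam ≠ 0 → ∀ y : Fin n → ℝ,
      (A *ᵥ x lam - b) ⬝ᵥ (A *ᵥ x lam - b) + lam ^ 2 * (x lam ⬝ᵥ x lam) ≤
      (A *ᵥ y - b) ⬝ᵥ (A *ᵥ y - b) + lam ^ 2 * (y ⬝ᵥ y) := by
    intro lam hlam y
    rw [expand_quad, expand_quad]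
    have := min_quad (hMps lam) (hMsym lam) (hMx lam hlam) y
    linarith
  -- main argument
  intro p hp q hq hpq
  simp only
  have hsum : ∀ t : ℝ, (∑ j, x t j ^ 2) = x t ⬝ᵥ x t := by
    intro t
    simp [dotProduct, sq]
  rw [hsum, hsum]
  apply Real.sqrt_le_sqrt
  rcases eq_or_lt_of_le hpq with rfl | hlt
  · exact le_rfl
  · have hp0 : (0:ℝ) < p := hp
    have hq0 : (0:ℝ) < q := hq
    have h1 := hmin p hp0.ne' (x q)
    have h2 := hmin q hq0.ne' (x p)
    have hsq : p ^ 2 < q ^ 2 := by nlinarith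
    nlinarith [h1, h2]
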